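/- Let n ≥ 1 be an integer, let 0 < β < 3 − 2√2, set Δ = (1 − β)² − 4β, y₁ = (1 − β + √Δ)/(2β), y₂ = (1 − β − √Δ)/(2β), t₁ = n − y₁ and t₂ = n − y₂, and define ξ(t) = e^{−βt}·g(max(1, n − t)). If t₁ < 0 and 0 ≤ t₂ < n − 1, then sup_{k ∈ ℕ} e^{−βk}·g(max(1, n − k)) = max( e^{−β⌊t₂⌋}·g(n − ⌊t₂⌋), e^{−β⌈t₂⌉}·g(n − ⌈t₂⌉) ). -/

import Mathlib

/-- Local sensitivity of the Gini impurity as a function of the support size. -/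
noncomputable def g (x : ℝ) : ℝ := 1 - (x / (x + 1))^2 - (1 / (x + 1))^2

lemma g_eq {x : ℝ} (hx : x + 1 ≠ 0) : g x = 2*x/(x+1)^2 := by
  unfold g; field_simp; ring

lemma hasDerivF (β c t : ℝ) (h : c - t + 1 ≠ 0) :
    HasDerivAt (fun s => Real.exp (-β*s) * (2*(c-s)/((c-s+1)^2)))
      (Real.exp (-β*t) * ((-2) * (β*(c-t)^2 - (1-β)*(c-t) + 1) / ((c-t+1)^3))) t := by
  have he : HasDerivAt (fun s : ℝ => Real.exp (-β*s)) (Real.exp (-β*t) * (-β)) t := by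
    have : HasDerivAt (fun s : ℝ => -β*s) (-β) t := by
      simpa using (hasDerivAt_id t).const_mul (-β)
    exact this.exp
  have hu : HasDerivAt (fun s : ℝ => 2*(c-s)) (2*(-1)) t := by
    have : HasDerivAt (fun s : ℝ => c - s) (-1) t := by
      simpa using (hasDerivAt_id t).const_sub c
    exact this.const_mul 2
  have hin : HasDerivAt (fun s : ℝ => c - s + 1) (-1) t := by
    have : HasDerivAt (fun s : ℝ => c - s) (-1) t := by
      simpa using (hasDerivAt_id t).const_sub c
    simpa using this.add_const 1
  have hv : HasDerivAt (fun s : ℝ => (c-s+1)^2) (2 * (c-t+1)^1 * (-1)) t := hin.pow 2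
  have hv2 : ((c-t+1)^2) ≠ 0 := pow_ne_zero _ h
  have hdiv := hu.div hv hv2
  have := he.mul hdiv
  refine this.congr_deriv ?_
  simp only [Pi.div_apply]
  have hexp := Real.exp_ne_zero (-β*t)
  field_simp
  ring

theorem smooth_sensitivity_small_beta_t1_neg (n : ℤ) (hn : 1 ≤ n) (β : ℝ)
    (hβ0 : 0 < β) (hβ1 : β < 3 - 2 * Real.sqrt 2)
    (Δ y₁ y₂ t₁ t₂ : ℝ)
    (hΔ : Δ = (1 - β)^2 - 4 * β)
    (hy₁ : y₁ = (1 - β + Real.sqrt Δ) / (2 * β))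
    (hy₂ : y₂ = (1 - β - Real.sqrt Δ) / (2 * β))
    (ht₁ : t₁ = (n : ℝ) - y₁) (ht₂ : t₂ = (n : ℝ) - y₂)
    (ht₁neg : t₁ < 0) (ht₂0 : 0 ≤ t₂) (ht₂lt : t₂ < (n : ℝ) - 1) :
    (⨆ k : ℕ, Real.exp (-β * (k : ℝ)) * g (max (1 : ℝ) ((n : ℝ) - (k : ℝ)))) =
      max (Real.exp (-β * (⌊t₂⌋ : ℝ)) * g ((n : ℝ) - (⌊t₂⌋ : ℝ)))
          (Real.exp (-β * (⌈t₂⌉ : ℝ)) * g ((n : ℝ) - (⌈t₂⌉ : ℝ))) := by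
  have hΔpos : 0 < Δ := by
    have h2 : Real.sqrt 2 ^ 2 = 2 := Real.sq_sqrt (by norm_num)
    rw [hΔ]; nlinarith [Real.sqrt_nonneg 2]
  have hs : Real.sqrt Δ ^ 2 = Δ := Real.sq_sqrt hΔpos.le
  have hsp : 0 < Real.sqrt Δ := Real.sqrt_pos.mpr hΔpos
  have h2β : (0:ℝ) < 2 * β := by linarith
  have hy12 : y₂ < y₁ := by
    rw [hy₁, hy₂]; exact div_lt_div_of_pos_right (by linarith) h2β
  have ht12 : t₁ < t₂ := by rw [ht₁, ht₂]; linarith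
  have hquad : ∀ y : ℝ, β*y^2 - (1-β)*y + 1 = β*(y - y₁)*(y - y₂) := by
    intro y; rw [hy₁, hy₂]; field_simp; nlinarith [hs]
  set F : ℝ → ℝ := fun s => Real.exp (-β*s) * (2*((n:ℝ)-s)/(((n:ℝ)-s+1)^2)) with hF
  -- basic interval facts
  have hn1 : (1:ℝ) ≤ (n:ℝ) := by exact_mod_cast hn
  -- ξ = F on [0, n-1]
  have hξF : ∀ x : ℝ, x ≤ (n:ℝ) - 1 →
      Real.exp (-β*x) * g (max 1 ((n:ℝ)-x)) = F x := by
    intro x hx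
    have h1 : (1:ℝ) ≤ (n:ℝ) - x := by linarith
    rw [max_eq_right h1, g_eq (by linarith)]
  have hg1 : g 1 = 1/2 := by norm_num [g]
  have hFn1 : F ((n:ℝ)-1) = Real.exp (-β*((n:ℝ)-1)) * (1/2) := by
    rw [hF]; norm_num
  -- deriv facts on [0, n-1]
  have hderiv : ∀ x : ℝ, x ≤ (n:ℝ)-1 → HasDerivAt F
      (Real.exp (-β*x) * ((-2) * (β*((n:ℝ)-x)^2 - (1-β)*((n:ℝ)-x) + 1) / (((n:ℝ)-x+1)^3))) x := by
    intro x hx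
    exact hasDerivF β (n:ℝ) x (by linarith)
  have hcont : ContinuousOn F (Set.Icc (0:ℝ) ((n:ℝ)-1)) := by
    intro x hx
    exact ((hderiv x hx.2).differentiableAt.continuousAt).continuousWithinAt
  -- monotone on [0, t₂]
  have hmono : MonotoneOn F (Set.Icc (0:ℝ) t₂) := by
    apply monotoneOn_of_deriv_nonneg (convex_Icc _ _)
    · exact hcont.mono (Set.Icc_subset_Icc le_rfl (by linarith))
    · intro x hx
      rw [interior_Icc] at hx
      exact ((hderiv x (by linarith [hx.2])).differentiableAt).differentiableWithinAt
    · intro x hx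
      rw [interior_Icc] at hx
      have hx2 : x < t₂ := hx.2
      rw [(hderiv x (by linarith)).deriv]
      have hq : β*((n:ℝ)-x)^2 - (1-β)*((n:ℝ)-x) + 1 < 0 := by
        rw [hquad]
        have h1 : (n:ℝ) - x - y₁ < 0 := by linarith [hx.1]
        have h2 : 0 < (n:ℝ) - x - y₂ := by linarith [hx.2]
        nlinarith [mul_pos (mul_pos hβ0 (show (0:ℝ) < -((n:ℝ) - x - y₁) by linarith)) h2]
      have hpos : (0:ℝ) < ((n:ℝ)-x+1)^3 := by
        have : (0:ℝ) < (n:ℝ)-x+1 := by linarith [hx.2]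
        positivity
      exact mul_nonneg (Real.exp_pos _).le (div_nonneg (by linarith) hpos.le)
  -- antitone on [t₂, n-1]
  have hanti : AntitoneOn F (Set.Icc t₂ ((n:ℝ)-1)) := by
    apply antitoneOn_of_deriv_nonpos (convex_Icc _ _)
    · exact hcont.mono (Set.Icc_subset_Icc (by linarith) le_rfl)
    · intro x hx
      rw [interior_Icc] at hx
      exact ((hderiv x hx.2.le).differentiableAt).differentiableWithinAt
    · intro x hx
      rw [interior_Icc] at hx
      rw [(hderiv x hx.2.le).deriv]
      have hq : 0 < β*((n:ℝ)-x)^2 - (1-β)*((n:ℝ)-x) + 1 := by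
        rw [hquad]
        have h1 : (n:ℝ) - x - y₁ < 0 := by linarith [hx.1]
        have h2 : (n:ℝ) - x - y₂ < 0 := by linarith [hx.1]
        nlinarith [mul_pos (mul_pos hβ0 (show (0:ℝ) < -((n:ℝ) - x - y₁) by linarith))
          (show (0:ℝ) < -((n:ℝ) - x - y₂) by linarith)]
      have hpos : (0:ℝ) < ((n:ℝ)-x+1)^3 := by
        have : (0:ℝ) < (n:ℝ)-x+1 := by linarith [hx.2]
        positivity
      have : (-2) * (β*((n:ℝ)-x)^2 - (1-β)*((n:ℝ)-x) + 1) / (((n:ℝ)-x+1)^3) ≤ 0 :=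
        div_nonpos_of_nonpos_of_nonneg (by linarith) hpos.le
      exact mul_nonpos_of_nonneg_of_nonpos (Real.exp_pos _).le this
  -- floor/ceil facts
  have hfl0 : 0 ≤ ⌊t₂⌋ := Int.floor_nonneg.mpr ht₂0
  have hfl : (⌊t₂⌋:ℝ) ≤ t₂ := Int.floor_le t₂
  have hcl : t₂ ≤ (⌈t₂⌉:ℝ) := Int.le_ceil t₂
  have hcleZ : ⌈t₂⌉ ≤ n - 1 := by
    rw [Int.ceil_le]; push_cast; linarith
  have hcle : (⌈t₂⌉:ℝ) ≤ (n:ℝ) - 1 := by exact_mod_cast hcleZ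
  have hcf : (⌈t₂⌉:ℝ) ≤ (⌊t₂⌋:ℝ) + 1 := by
    exact_mod_cast Int.ceil_le_floor_add_one t₂
  -- evaluation at floor / ceil indices
  have hmaxfl : max (1:ℝ) ((n:ℝ) - (⌊t₂⌋:ℝ)) = (n:ℝ) - (⌊t₂⌋:ℝ) :=
    max_eq_right (by linarith)
  have hmaxcl : max (1:ℝ) ((n:ℝ) - (⌈t₂⌉:ℝ)) = (n:ℝ) - (⌈t₂⌉:ℝ) :=
    max_eq_right (by linarith)
  have hflF : Real.exp (-β * (⌊t₂⌋:ℝ)) * g ((n:ℝ) - (⌊t₂⌋:ℝ)) = F ((⌊t₂⌋:ℝ)) := by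
    rw [← hmaxfl]; exact hξF _ (by linarith)
  have hclF : Real.exp (-β * (⌈t₂⌉:ℝ)) * g ((n:ℝ) - (⌈t₂⌉:ℝ)) = F ((⌈t₂⌉:ℝ)) := by
    rw [← hmaxcl]; exact hξF _ (by linarith)
  -- upper bound
  have hub : ∀ k : ℕ, Real.exp (-β * (k:ℝ)) * g (max 1 ((n:ℝ) - (k:ℝ))) ≤
      max (Real.exp (-β * (⌊t₂⌋:ℝ)) * g ((n:ℝ) - (⌊t₂⌋:ℝ)))
        (Real.exp (-β * (⌈t₂⌉:ℝ)) * g ((n:ℝ) - (⌈t₂⌉:ℝ))) := by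
    intro k
    rcases le_or_gt ((k:ℝ)) ((⌊t₂⌋:ℝ)) with h | h
    · refine le_trans ?_ (le_max_left _ _)
      rw [hξF _ (by linarith), hflF]
      exact hmono ⟨Nat.cast_nonneg k, by linarith⟩ ⟨by exact_mod_cast hfl0, hfl⟩ h
    · refine le_trans ?_ (le_max_right _ _)
      have hck : (⌈t₂⌉:ℝ) ≤ (k:ℝ) := by
        have hz : ⌊t₂⌋ + 1 ≤ (k:ℤ) := by exact_mod_cast h
        calc (⌈t₂⌉:ℝ) ≤ (⌊t₂⌋:ℝ) + 1 := hcf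
          _ ≤ (k:ℝ) := by exact_mod_cast hz
      rcases le_or_gt ((k:ℝ)) ((n:ℝ)-1) with h2 | h2
      · rw [hξF _ h2, hclF]
        exact hanti ⟨hcl, hcle⟩ ⟨by linarith, h2⟩ hck
      · rw [max_eq_left (by linarith), hg1, hclF]
        have e1 : Real.exp (-β * (k:ℝ)) * (1/2) ≤ Real.exp (-β*((n:ℝ)-1)) * (1/2) := by
          have hh : -β * (k:ℝ) ≤ -β*((n:ℝ)-1) := by
            have := mul_le_mul_of_nonneg_left h2.le hβ0.le
            linarith
          have := Real.exp_le_exp.mpr hh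
          linarith
        refine e1.trans ?_
        rw [← hFn1]
        exact hanti ⟨hcl, hcle⟩ ⟨by linarith, le_rfl⟩ hcle
  have hbdd : BddAbove (Set.range fun k : ℕ =>
      Real.exp (-β * (k:ℝ)) * g (max 1 ((n:ℝ) - (k:ℝ)))) := by
    refine ⟨max (Real.exp (-β * (⌊t₂⌋:ℝ)) * g ((n:ℝ) - (⌊t₂⌋:ℝ)))
      (Real.exp (-β * (⌈t₂⌉:ℝ)) * g ((n:ℝ) - (⌈t₂⌉:ℝ))), ?_⟩
    rintro _ ⟨k, rfl⟩
    exact hub k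
  apply le_antisymm
  · exact ciSup_le hub
  · apply max_le
    · have hkf : ((⌊t₂⌋.toNat : ℕ) : ℝ) = (⌊t₂⌋:ℝ) := by
        exact_mod_cast congrArg (Int.cast : ℤ → ℝ) (Int.toNat_of_nonneg hfl0)
      calc Real.exp (-β * (⌊t₂⌋:ℝ)) * g ((n:ℝ) - (⌊t₂⌋:ℝ))
          = Real.exp (-β * ((⌊t₂⌋.toNat : ℕ):ℝ)) * g (max 1 ((n:ℝ) - ((⌊t₂⌋.toNat : ℕ):ℝ))) := by
            rw [hkf, hmaxfl]
        _ ≤ _ := le_ciSup hbdd ⌊t₂⌋.toNat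
    · have hcl0 : 0 ≤ ⌈t₂⌉ := Int.ceil_nonneg ht₂0
      have hkc : ((⌈t₂⌉.toNat : ℕ) : ℝ) = (⌈t₂⌉:ℝ) := by
        exact_mod_cast congrArg (Int.cast : ℤ → ℝ) (Int.toNat_of_nonneg hcl0)
      calc Real.exp (-β * (⌈t₂⌉:ℝ)) * g ((n:ℝ) - (⌈t₂⌉:ℝ))
          = Real.exp (-β * ((⌈t₂⌉.toNat : ℕ):ℝ)) * g (max 1 ((n:ℝ) - ((⌈t₂⌉.toNat : ℕ):ℝ))) := by
            rw [hkc, hmaxcl]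
        _ ≤ _ := le_ciSup hbdd ⌈t₂⌉.toNat
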